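/- There exists a function h : ℕ³ → ℕ such that for all positive integers k, d, t: if M is a matroid having at least h(k,d,t) distinct circuits of size k, and every t-element subset of E(M) is contained in a cocircuit of size 2t, then M has a collection of d pairwise disjoint cocircuits each of size 2t. -/

import Mathlib

open Set Function

namespace Matroid

variable {α : Type*}

/-- A circuit of a matroid: a minimal dependent set. -/
def IsCircuit' (M : Matroid α) (C : Set α) : Prop := Minimal M.Dep C

/-- A cocircuit of a matroid: a circuit of the dual matroid. -/
def IsCocircuit' (M : Matroid α) (C : Set α) : Prop := M✶.IsCircuit' C

/-- The `ℕ`-valued rank of a set `X` in a matroid `M`: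
the size of a largest independent subset of `X`. -/
noncomputable def rk' (M : Matroid α) (X : Set α) : ℕ :=
  sSup {n : ℕ | ∃ I, M.Indep I ∧ I ⊆ X ∧ I.ncard = n}

/-- The connectivity function `λ(X) = r(X) + r(E − X) − r(M)`. -/
noncomputable def lam' (M : Matroid α) (X : Set α) : ℕ :=
  M.rk' X + M.rk' (M.E \ X) - M.rk' M.E

/-- The `(s,u,t,v)`-property: every `s`-element subset of the ground set is contained in a
circuit of size `u`, and every `t`-element subset is contained in a cocircuit of size `v`. -/
def HasProp (M : Matroid α) (s u t v : ℕ) : Prop :=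
  (∀ S ⊆ M.E, S.ncard = s → ∃ C, M.IsCircuit' C ∧ C.ncard = u ∧ S ⊆ C) ∧
  (∀ T ⊆ M.E, T.ncard = t → ∃ C, M.IsCocircuit' C ∧ C.ncard = v ∧ T ⊆ C)

/-- A `t`-echidna of order `n`: a family of `n` pairwise disjoint `2`-element subsets of the
ground set (spines) such that the union of any `t` spines is a circuit.
(A `t`-coechidna of `M` is a `t`-echidna of `M✶`.) -/
def IsEchidna (M : Matroid α) (t : ℕ) {n : ℕ} (S : Fin n → Set α) : Prop :=
  (∀ i, S i ⊆ M.E) ∧ (∀ i, (S i).ncard = 2) ∧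
  Pairwise (Function.onFun Disjoint S) ∧
  ∀ I : Finset (Fin n), I.card = t → M.IsCircuit' (⋃ i ∈ I, S i)

/-- `M` is an `(s,t)`-spike with associated partition `(A 1, …, A m)`: the `A i` are `m`
pairwise disjoint pairs partitioning the ground set, with `m ≥ max s t`, such that the union of
any `s` pairs is a circuit and the union of any `t` pairs is a cocircuit. -/
def IsSpike (M : Matroid α) (s t : ℕ) {m : ℕ} (A : Fin m → Set α) : Prop :=
  max s t ≤ m ∧ (⋃ i, A i) = M.E ∧
  Pairwise (Function.onFun Disjoint A) ∧ (∀ i, (A i).ncard = 2) ∧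
  (∀ I : Finset (Fin m), I.card = s → M.IsCircuit' (⋃ i ∈ I, A i)) ∧
  (∀ I : Finset (Fin m), I.card = t → M.IsCocircuit' (⋃ i ∈ I, A i))

end Matroid

namespace Matroid

variable {α : Type*} {M : Matroid α} {C C₁ C₂ D K X : Set α} {e f : α}

lemma IsCircuit'.dep (h : M.IsCircuit' C) : M.Dep C := h.1

lemma IsCircuit'.subset_ground (h : M.IsCircuit' C) : C ⊆ M.E := h.1.subset_ground

lemma IsCircuit'.finite (h : M.IsCircuit' C) (hE : M.E.Finite) : C.Finite :=
  hE.subset h.subset_ground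

lemma IsCircuit'.diff_singleton_indep (h : M.IsCircuit' C) (he : e ∈ C) :
    M.Indep (C \ {e}) := by
  by_contra hcon
  have hdep : M.Dep (C \ {e}) := ⟨hcon, diff_subset.trans h.subset_ground⟩
  have hle := h.2 hdep diff_subset
  exact (hle he).2 rfl

lemma IsCircuit'.mem_closure_diff_singleton (h : M.IsCircuit' C) (he : e ∈ C) :
    e ∈ M.closure (C \ {e}) := by
  have hi : M.Indep (C \ {e}) := h.diff_singleton_indep he
  have hni : e ∉ C \ {e} := fun h' => h'.2 rfl
  rw [hi.mem_closure_iff_of_notMem hni]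
  have : insert e (C \ {e}) = C := by
    rw [insert_diff_singleton, insert_eq_of_mem he]
  rw [this]
  exact h.dep

/-- Every dependent set in a finite matroid contains a circuit. -/
lemma Dep.exists_isCircuit'_subset (hE : M.E.Finite) (hD : M.Dep D) :
    ∃ C, C ⊆ D ∧ M.IsCircuit' C := by
  have hDfin : D.Finite := hE.subset hD.subset_ground
  obtain ⟨n, hn⟩ : ∃ n, D.ncard ≤ n := ⟨D.ncard, le_rfl⟩
  induction n generalizing D with
  | zero =>
    have : D = ∅ := by
      rw [← Set.ncard_eq_zero hDfin]; omega
    exact absurd (this ▸ hD).nonempty (by simp)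
  | succ n ih =>
    by_cases hmin : ∀ Y, M.Dep Y → Y ⊆ D → D ⊆ Y
    · exact ⟨D, subset_rfl, hD, fun Y hY hle => hmin Y hY hle⟩
    · push_neg at hmin
      obtain ⟨Y, hYdep, hYD, hnle⟩ := hmin
      have hYfin : Y.Finite := hDfin.subset hYD
      have hlt : Y.ncard < D.ncard := by
        refine Set.ncard_lt_ncard ?_ hDfin
        exact ssubset_of_subset_not_subset hYD hnle
      obtain ⟨C, hCY, hC⟩ := ih hYdep hYfin (by omega)
      exact ⟨C, hCY.trans hYD, hC⟩

lemma exists_isCircuit'_of_mem_closure (hE : M.E.Finite) (hX : X ⊆ M.E)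
    (hfX : f ∈ M.closure X) (hf : f ∉ X) :
    ∃ C, M.IsCircuit' C ∧ f ∈ C ∧ C ⊆ insert f X := by
  obtain ⟨I, hI⟩ := M.exists_isBasis X hX
  have hfI : f ∈ M.closure I := by rwa [hI.closure_eq_closure]
  have hfnI : f ∉ I := fun h => hf (hI.subset h)
  have hdep : M.Dep (insert f I) := by
    rw [hI.indep.insert_dep_iff]; exact ⟨hfI, hfnI⟩
  obtain ⟨C, hCsub, hC⟩ := hdep.exists_isCircuit'_subset hE
  have hfC : f ∈ C := by
    by_contra hfc
    have : C ⊆ I := fun x hx => by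
      rcases hCsub hx with h | h
      · exact absurd (h ▸ hx) hfc
      · exact h
    exact hC.dep.not_indep (hI.indep.subset this)
  exact ⟨C, hC, hfC, hCsub.trans (insert_subset_insert hI.subset)⟩

/-- Strong circuit elimination. -/
lemma IsCircuit'.strong_elimination (hE : M.E.Finite) (h₁ : M.IsCircuit' C₁)
    (h₂ : M.IsCircuit' C₂) (he : e ∈ C₁ ∩ C₂) (hf : f ∈ C₁ \ C₂) :
    ∃ C, M.IsCircuit' C ∧ f ∈ C ∧ C ⊆ (C₁ ∪ C₂) \ {e} := by
  classical
  set X : Set α := (C₁ ∪ C₂) \ {e, f} with hXdef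
  have hXE : X ⊆ M.E := diff_subset.trans (union_subset h₁.subset_ground h₂.subset_ground)
  have hef : e ≠ f := fun h => hf.2 (h ▸ he.2)
  have hC₂X : C₂ \ {e} ⊆ X := by
    intro x hx
    refine ⟨Or.inr hx.1, ?_⟩
    intro hmem
    rcases hmem with h | h
    · exact hx.2 h
    · rw [mem_singleton_iff] at h; subst h; exact hf.2 hx.1
  have heX : e ∈ M.closure X :=
    M.closure_subset_closure hC₂X (h₂.mem_closure_diff_singleton he.2)
  have hC₁X : C₁ \ {f} ⊆ M.closure X := by
    intro x hx
    rcases eq_or_ne x e with rfl | hxe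
    · exact heX
    · refine M.subset_closure X hXE ⟨Or.inl hx.1, ?_⟩
      intro hmem
      rcases hmem with h | h
      · exact hxe h
      · rw [mem_singleton_iff] at h; exact hx.2 h
  have hfX : f ∈ M.closure X := by
    have h1 : f ∈ M.closure (C₁ \ {f}) := h₁.mem_closure_diff_singleton hf.1
    have h2 : M.closure (C₁ \ {f}) ⊆ M.closure X :=
      M.closure_subset_closure_of_subset_closure hC₁X
    exact h2 h1
  have hfnX : f ∉ X := fun h => h.2 (Or.inr rfl)
  obtain ⟨C, hC, hfC, hCsub⟩ := exists_isCircuit'_of_mem_closure hE hXE hfX hfnX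
  refine ⟨C, hC, hfC, hCsub.trans ?_⟩
  intro x hx
  rcases hx with rfl | hx
  · exact ⟨Or.inl hf.1, fun h => hef (h.symm)⟩
  · exact ⟨hx.1, fun h => hx.2 (Or.inl h)⟩

/-- Orthogonality: a circuit and a cocircuit cannot meet in exactly one element. -/
lemma IsCircuit'.inter_cocircuit_exists_ne (hE : M.E.Finite) (hC : M.IsCircuit' C)
    (hK : M.IsCocircuit' K) (he : e ∈ C ∩ K) : ∃ f, f ∈ C ∩ K ∧ f ≠ e := by
  by_contra hcon
  push_neg at hcon
  have hinter : C ∩ K = {e} := by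
    apply subset_antisymm
    · intro x hx
      by_contra hne
      exact hne (hcon x hx)
    · intro x hx
      rw [mem_singleton_iff] at hx; subst hx; exact he
  have hKE : K ⊆ M.E := by
    have := hK.subset_ground; rwa [dual_ground] at this
  -- K \ {e} is coindependent
  have hKe : M✶.Indep (K \ {e}) := hK.diff_singleton_indep he.2
  have hco : M.Coindep (K \ {e}) := by rwa [coindep_def]
  have hsp : M.Spanning (M.E \ (K \ {e})) := hco.compl_spanning
  -- e ∈ closure of (M.E \ (K \ {e})) \ {e} = M.E \ K... 
  have hCe : C \ {e} ⊆ M.E \ K := by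
    intro x hx
    refine ⟨hC.subset_ground hx.1, fun hxK => hx.2 ?_⟩
    have : x ∈ C ∩ K := ⟨hx.1, hxK⟩
    rw [hinter] at this; exact this
  have hecl : e ∈ M.closure (M.E \ K) :=
    M.closure_subset_closure hCe (hC.mem_closure_diff_singleton he.1)
  have hspan2 : M.Spanning (M.E \ K) := by
    have hset : M.E \ (K \ {e}) = insert e (M.E \ K) := by
      ext x
      simp only [mem_diff, mem_singleton_iff, mem_insert_iff, not_and, not_not]
      constructor
      · rintro ⟨hxE, hx⟩
        by_cases hxK : x ∈ K
        · exact Or.inl (hx hxK)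
        · exact Or.inr ⟨hxE, hxK⟩
      · rintro (rfl | ⟨hxE, hxK⟩)
        · exact ⟨hC.subset_ground he.1, fun _ => rfl⟩
        · exact ⟨hxE, fun h => absurd h hxK⟩
    have hcleq : M.closure (M.E \ K) = M.closure (M.E \ (K \ {e})) := by
      rw [hset, closure_insert_eq_of_mem_closure hecl]
    have := hsp.closure_eq
    rw [← hcleq] at this
    exact ⟨this, diff_subset⟩
  have hcoK : M.Coindep K := by
    rw [coindep_iff_compl_spanning hKE]; exact hspan2
  exact hK.dep.not_indep hcoK

end Matroid

namespace Statement8Aux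

variable {α : Type*} {β : Type*} {ι : Type*}

/-- ncard of a disjoint union over `Fin n`. -/
lemma ncard_iUnion_fin : ∀ (n : ℕ) (A : Fin n → Set α), (∀ i, (A i).Finite) →
    (Pairwise (Function.onFun Disjoint A)) → (⋃ i, A i).ncard = ∑ i, (A i).ncard := by
  intro n
  induction n with
  | zero => intro A _ _; simp
  | succ n ih =>
    intro A hfin hdisj
    have hsplit : (⋃ i, A i) = A 0 ∪ ⋃ i : Fin n, A i.succ := by
      ext x
      simp only [mem_iUnion, mem_union]
      constructor
      · rintro ⟨i, hi⟩
        rcases Fin.eq_zero_or_eq_succ i with rfl | ⟨j, rfl⟩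
        · exact Or.inl hi
        · exact Or.inr ⟨j, hi⟩
      · rintro (h | ⟨j, hj⟩)
        · exact ⟨0, h⟩
        · exact ⟨j.succ, hj⟩
    have hdisj0 : Disjoint (A 0) (⋃ i : Fin n, A i.succ) := by
      rw [Set.disjoint_iUnion_right]
      intro i
      exact hdisj (by simp [Fin.ext_iff])
    have hfin' : (⋃ i : Fin n, A i.succ).Finite := Set.finite_iUnion (fun i => hfin _)
    rw [hsplit, Set.ncard_union_eq hdisj0 (hfin 0) hfin',
      ih (fun i => A i.succ) (fun i => hfin _)
        (fun i j hij => hdisj (fun h => hij (Fin.succ_injective _ h))),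
      Fin.sum_univ_succ]

lemma sum_ncard_le_of_disjoint_parts {C : Set α} (hC : C.Finite) {n : ℕ} (A : Fin n → Set α)
    (hsub : ∀ i, A i ⊆ C) (hdisj : Pairwise (Function.onFun Disjoint A)) :
    ∑ i, (A i).ncard ≤ C.ncard := by
  rw [← ncard_iUnion_fin n A (fun i => hC.subset (hsub i)) hdisj]
  exact Set.ncard_le_ncard (Set.iUnion_subset hsub) hC

/-- Extract an injection `Fin m` into a finset of size at least `m`. -/
lemma exists_injection_of_card_le {s : Finset ι} {m : ℕ} (h : m ≤ s.card) :
    ∃ g : Fin m → ι, Function.Injective g ∧ ∀ i, g i ∈ s := by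
  obtain ⟨t, hts, hcard⟩ := Finset.exists_subset_card_eq h
  have e := t.equivFin
  refine ⟨fun i => (e.symm (Fin.cast hcard.symm i) : ι), ?_, fun i => hts (e.symm _).2⟩
  intro i j hij
  have : e.symm (Fin.cast hcard.symm i) = e.symm (Fin.cast hcard.symm j) := Subtype.ext hij
  simpa [Fin.ext_iff] using (e.symm.injective this)

/-- Pigeonhole: a function from `Fin m` with values in a finset `V` has a fiber of
size at least `m / V.card`. -/
lemma exists_large_fiber {m : ℕ} (f : Fin m → β) (V : Finset β) [DecidableEq β]
    (hf : ∀ i, f i ∈ V) (hm : 0 < m) :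
    ∃ b ∈ V, ∀ c : ℕ, (Finset.univ.filter (fun i => f i = b)).card < c →
      m < V.card * c := by
  classical
  by_contra hcon
  push_neg at hcon
  have hsum : ∑ b ∈ V, (Finset.univ.filter (fun i => f i = b)).card = m := by
    have h0 : (Finset.univ : Finset (Fin m)).card = m := by simp
    have h1 := Finset.card_eq_sum_card_fiberwise (fun (i : Fin m) (_ : i ∈ Finset.univ) => hf i)
    omega
  -- from hcon: for each b ∈ V there is c with fiber < c and V.card * c ≤ m
  -- i.e. fiber ≤ c - 1 and so V.card * (fiber + 1) ≤ V.card * c ≤ m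
  have hb : ∀ b ∈ V, V.card * ((Finset.univ.filter (fun i => f i = b)).card + 1) ≤ m := by
    intro b hbV
    obtain ⟨c, hc1, hc2⟩ := hcon b hbV
    have : (Finset.univ.filter (fun i => f i = b)).card + 1 ≤ c := hc1
    calc V.card * ((Finset.univ.filter (fun i => f i = b)).card + 1)
        ≤ V.card * c := Nat.mul_le_mul_left _ this
      _ ≤ m := hc2
  -- so each fiber satisfies fiber + 1 ≤ m / V.card ... sum bound
  have hVpos : 0 < V.card := by
    rcases Finset.card_pos.2 ⟨f ⟨0, hm⟩, hf _⟩ with h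
    exact h
  -- every fiber card ≤ m / V.card - ... use: fiber + 1 ≤ m / V.card? Work with sums directly.
  -- ∑ fibers = m, and each fiber ≥ ... contradiction: each fiber ≤ (m / V.card) requires care.
  -- Instead: m = ∑ fiber ≤ V.card * maxfiber; take b achieving max.
  obtain ⟨b0, hb0V, hb0⟩ := Finset.exists_max_image V
    (fun b => (Finset.univ.filter (fun i => f i = b)).card) ⟨f ⟨0, hm⟩, hf _⟩
  have hsum_le : m ≤ V.card * (Finset.univ.filter (fun i => f i = b0)).card := by
    calc m = ∑ b ∈ V, (Finset.univ.filter (fun i => f i = b)).card := hsum.symm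
      _
        ≤ ∑ _b ∈ V, (Finset.univ.filter (fun i => f i = b0)).card :=
          Finset.sum_le_sum (fun b hbV => hb0 b hbV)
      _ = V.card * (Finset.univ.filter (fun i => f i = b0)).card := by
          rw [Finset.sum_const, smul_eq_mul]
  have h1 := hb b0 hb0V
  have h2 : V.card * ((Finset.univ.filter (fun i => f i = b0)).card + 1) ≤
      V.card * (Finset.univ.filter (fun i => f i = b0)).card := le_trans h1 hsum_le
  have h3 : V.card * ((Finset.univ.filter (fun i => f i = b0)).card + 1) =
      V.card * (Finset.univ.filter (fun i => f i = b0)).card + V.card := by ring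
  omega


/-- Pigeonhole, finset version. -/
lemma exists_large_fiber' [DecidableEq β] (s : Finset ι) (f : ι → β) (V : Finset β)
    (hf : ∀ i ∈ s, f i ∈ V) (hs : 0 < s.card) :
    ∃ b ∈ V, ∀ c : ℕ, (s.filter (fun i => f i = b)).card < c → s.card < V.card * c := by
  classical
  obtain ⟨i0, hi0⟩ := Finset.card_pos.mp hs
  have hsum : ∑ b ∈ V, (s.filter (fun i => f i = b)).card = s.card :=
    (Finset.card_eq_sum_card_fiberwise hf).symm
  obtain ⟨b0, hb0V, hb0⟩ := Finset.exists_max_image V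
    (fun b => (s.filter (fun i => f i = b)).card) ⟨f i0, hf i0 hi0⟩
  refine ⟨b0, hb0V, fun c hc => ?_⟩
  have hsum_le : s.card ≤ V.card * (s.filter (fun i => f i = b0)).card := by
    calc s.card = ∑ b ∈ V, (s.filter (fun i => f i = b)).card := hsum.symm
      _ ≤ ∑ _b ∈ V, (s.filter (fun i => f i = b0)).card :=
          Finset.sum_le_sum (fun b hbV => hb0 b hbV)
      _ = V.card * (s.filter (fun i => f i = b0)).card := by
          rw [Finset.sum_const, smul_eq_mul]
  have hVpos : 0 < V.card := Finset.card_pos.mpr ⟨f i0, hf i0 hi0⟩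
  have : V.card * (s.filter (fun i => f i = b0)).card < V.card * c :=
    Nat.mul_lt_mul_of_pos_left hc hVpos
  omega

lemma ncard_biUnion_le (𝒟 : Finset (Set α)) (k : ℕ) (h : ∀ D ∈ 𝒟, D.ncard ≤ k)
    (hfin : ∀ D ∈ 𝒟, D.Finite) : (⋃ D ∈ 𝒟, D).ncard ≤ 𝒟.card * k := by
  classical
  induction 𝒟 using Finset.induction_on with
  | empty => simp
  | @insert a s ha ih =>
    have hsplit : (⋃ D ∈ insert a s, D) = a ∪ ⋃ D ∈ s, D := by
      simp [Set.biUnion_insert]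
    rw [hsplit]
    calc (a ∪ ⋃ D ∈ s, D).ncard ≤ a.ncard + (⋃ D ∈ s, D).ncard := Set.ncard_union_le _ _
      _ ≤ k + s.card * k := by
          have h1 := h a (Finset.mem_insert_self a s)
          have h2 := ih (fun D hD => h D (Finset.mem_insert_of_mem hD))
            (fun D hD => hfin D (Finset.mem_insert_of_mem hD))
          omega
      _ = (insert a s).card * k := by
          rw [Finset.card_insert_of_notMem ha]; ring

/-- Bound function for the weak sunflower lemma. -/
def sfBound : ℕ → ℕ → ℕ
  | 0, _ => 2
  | (k+1), P => ((k+1) * (P+1) + 1) * sfBound k P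

lemma sfBound_pos (k P : ℕ) : 0 < sfBound k P := by
  induction k with
  | zero => simp [sfBound]
  | succ k ih =>
    have : 0 < (k+1) * (P+1) + 1 := by positivity
    simpa [sfBound] using Nat.mul_pos this ih

/-- Weak sunflower lemma: a large family of distinct `k`-sets contains `P` sets whose
pairwise intersections are all contained in a common core `Z` contained in all of them. -/
lemma weak_sunflower (P : ℕ) : ∀ (k : ℕ) (𝒞 : Finset (Set α)),
    (∀ D ∈ 𝒞, D.Finite ∧ D.ncard = k) → sfBound k P ≤ 𝒞.card →
    ∃ (Z : Set α) (𝒟 : Finset (Set α)), 𝒟 ⊆ 𝒞 ∧ P ≤ 𝒟.card ∧ (∀ D ∈ 𝒟, Z ⊆ D) ∧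
      (∀ D ∈ 𝒟, ∀ D' ∈ 𝒟, D ≠ D' → D ∩ D' ⊆ Z) := by
  intro k
  induction k with
  | zero =>
    intro 𝒞 hmem hcard
    exfalso
    have hsub : 𝒞 ⊆ {(∅ : Set α)} := by
      intro D hD
      obtain ⟨hfin, hnc⟩ := hmem D hD
      rw [Finset.mem_singleton]
      exact (Set.ncard_eq_zero hfin).mp hnc
    have := Finset.card_le_card hsub
    simp only [Finset.card_singleton] at this
    simp only [sfBound] at hcard
    omega
  | succ k ih =>
    intro 𝒞 hmem hcard
    classical
    set 𝒮 := 𝒞.powerset.filter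
      (fun 𝒟 => ∀ D ∈ 𝒟, ∀ D' ∈ 𝒟, D ≠ D' → Disjoint D D') with h𝒮def
    have hEmptyMem : (∅ : Finset (Set α)) ∈ 𝒮 := by simp [h𝒮def]
    obtain ⟨𝒟₀, h𝒟₀mem, h𝒟₀max⟩ := Finset.exists_max_image 𝒮 Finset.card ⟨∅, hEmptyMem⟩
    rw [h𝒮def, Finset.mem_filter, Finset.mem_powerset] at h𝒟₀mem
    obtain ⟨h𝒟₀sub, h𝒟₀disj⟩ := h𝒟₀mem
    by_cases hbig : P ≤ 𝒟₀.card
    · refine ⟨∅, 𝒟₀, h𝒟₀sub, hbig, fun D _ => Set.empty_subset D, ?_⟩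
      intro D hD D' hD' hne
      rw [Set.disjoint_iff_inter_eq_empty.mp (h𝒟₀disj D hD D' hD' hne)]
    · -- every member of 𝒞 meets S = ⋃ 𝒟₀
      push_neg at hbig
      set S : Set α := ⋃ D ∈ 𝒟₀, D with hSdef
      have hSfin : S.Finite := Set.Finite.biUnion 𝒟₀.finite_toSet
        (fun D hD => (hmem D (h𝒟₀sub hD)).1)
      have hScard : S.ncard ≤ 𝒟₀.card * (k+1) :=
        ncard_biUnion_le 𝒟₀ (k+1) (fun D hD => le_of_eq (hmem D (h𝒟₀sub hD)).2)
          (fun D hD => (hmem D (h𝒟₀sub hD)).1)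
      have hmeets : ∀ D ∈ 𝒞, ∃ x, x ∈ D ∧ x ∈ S := by
        intro D hD
        by_contra hno
        push_neg at hno
        have hdisjS : ∀ A ∈ 𝒟₀, Disjoint D A := by
          intro A hA
          refine Set.disjoint_left.mpr (fun y hyD hyA => hno y hyD ?_)
          exact Set.mem_biUnion (Finset.mem_coe.mpr hA) hyA
        have hDnonempty : D.Nonempty := by
          apply Set.nonempty_of_ncard_ne_zero
          rw [(hmem D hD).2]; omega
        have hDne : D ∉ 𝒟₀ := by
          intro hDin
          obtain ⟨y, hy⟩ := hDnonempty
          exact hno y hy (Set.mem_biUnion (Finset.mem_coe.mpr hDin) hy)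
        have hins : insert D 𝒟₀ ∈ 𝒮 := by
          rw [h𝒮def, Finset.mem_filter, Finset.mem_powerset]
          refine ⟨Finset.insert_subset hD h𝒟₀sub, ?_⟩
          intro A hA A' hA' hne
          rcases Finset.mem_insert.mp hA with rfl | hA1
          · rcases Finset.mem_insert.mp hA' with h | hA2
            · exact absurd h.symm hne
            · exact hdisjS A' hA2
          · rcases Finset.mem_insert.mp hA' with rfl | hA2
            · exact (hdisjS A hA1).symm
            · exact h𝒟₀disj A hA1 A' hA2 hne
        have := h𝒟₀max _ hins
        rw [Finset.card_insert_of_notMem hDne] at this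
        omega
      -- choice function into S
      have hCpos : 0 < 𝒞.card := by
        have := sfBound_pos (k+1) P; omega
      obtain ⟨D₁, hD₁⟩ := Finset.card_pos.mp hCpos
      haveI : Nonempty α := ⟨(hmeets D₁ hD₁).choose⟩
      set φ : Set α → α :=
        (fun D => if h : ∃ x, x ∈ D ∧ x ∈ S then h.choose else Classical.arbitrary α)
        with hφdef
      have hφmem : ∀ D ∈ 𝒞, φ D ∈ D ∧ φ D ∈ S := by
        intro D hD
        have h := hmeets D hD
        rw [hφdef]
        simp only [dif_pos h]
        exact h.choose_spec
      obtain ⟨x, hxV, hxfib⟩ := exists_large_fiber' 𝒞 φ hSfin.toFinset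
        (fun D hD => hSfin.mem_toFinset.mpr (hφmem D hD).2) hCpos
      set ℱ := 𝒞.filter (fun D => φ D = x) with hℱdef
      have hxmem : ∀ D ∈ ℱ, x ∈ D := by
        intro D hD
        rw [hℱdef, Finset.mem_filter] at hD
        exact hD.2 ▸ (hφmem D hD.1).1
      have hℱcard : sfBound k P ≤ ℱ.card := by
        by_contra hlt
        push_neg at hlt
        have h1 := hxfib (sfBound k P) hlt
        have h2 : hSfin.toFinset.card ≤ (k+1) * (P+1) := by
          have hcardS : hSfin.toFinset.card = S.ncard :=
            (Set.ncard_eq_toFinset_card S hSfin).symm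
          have h3 : 𝒟₀.card * (k+1) ≤ (k+1)*(P+1) := by
            calc 𝒟₀.card * (k+1) ≤ (P+1) * (k+1) := Nat.mul_le_mul_right _ (by omega)
              _ = (k+1)*(P+1) := by ring
          omega
        have h4 : hSfin.toFinset.card * sfBound k P ≤ ((k+1)*(P+1)) * sfBound k P :=
          Nat.mul_le_mul_right _ h2
        have h5 : ((k+1)*(P+1)) * sfBound k P < ((k+1) * (P+1) + 1) * sfBound k P := by
          have := sfBound_pos k P
          have : ((k+1)*(P+1)) * sfBound k P + sfBound k P
              = ((k+1) * (P+1) + 1) * sfBound k P := by ring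
          omega
        simp only [sfBound] at hcard
        omega
      -- image family of k-sets
      set ℱ' := ℱ.image (fun D => D \ {x}) with hℱ'def
      have hinj : Set.InjOn (fun D => D \ {x}) (ℱ : Set (Set α)) := by
        intro D hD D' hD' heq
        have hxD : x ∈ D := hxmem D (by exact_mod_cast hD)
        have hxD' : x ∈ D' := hxmem D' (by exact_mod_cast hD')
        have : insert x (D \ {x}) = insert x (D' \ {x}) := by
          simp only at heq; rw [heq]
        rwa [Set.insert_diff_singleton, Set.insert_diff_singleton,
          Set.insert_eq_of_mem hxD, Set.insert_eq_of_mem hxD'] at this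
      have hℱ'card : sfBound k P ≤ ℱ'.card := by
        rw [hℱ'def, Finset.card_image_of_injOn hinj]
        exact hℱcard
      have hℱ'mem : ∀ A ∈ ℱ', A.Finite ∧ A.ncard = k := by
        intro A hA
        rw [hℱ'def, Finset.mem_image] at hA
        obtain ⟨D, hD, rfl⟩ := hA
        have hDC : D ∈ 𝒞 := Finset.mem_of_mem_filter D hD
        obtain ⟨hfin, hnc⟩ := hmem D hDC
        refine ⟨hfin.subset Set.diff_subset, ?_⟩
        rw [Set.ncard_diff_singleton_of_mem (hxmem D hD), hnc]
        omega
      obtain ⟨Z', 𝒟', h𝒟'sub, h𝒟'card, h𝒟'Z, h𝒟'int⟩ := ih ℱ' hℱ'mem hℱ'card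
      set 𝒟 := ℱ.filter (fun D => D \ {x} ∈ 𝒟') with h𝒟def
      have h𝒟img : 𝒟' ⊆ 𝒟.image (fun D => D \ {x}) := by
        intro A hA
        obtain ⟨D, hDℱ, hDA⟩ := Finset.mem_image.mp (h𝒟'sub hA)
        exact Finset.mem_image.mpr ⟨D, Finset.mem_filter.mpr ⟨hDℱ, hDA ▸ hA⟩, hDA⟩
      refine ⟨insert x Z', 𝒟, ?_, ?_, ?_, ?_⟩
      · intro D hD
        exact Finset.mem_of_mem_filter D (Finset.mem_of_mem_filter D hD)
      · calc P ≤ 𝒟'.card := h𝒟'card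
          _ ≤ (𝒟.image (fun D => D \ {x})).card := Finset.card_le_card h𝒟img
          _ ≤ 𝒟.card := Finset.card_image_le
      · intro D hD
        rw [h𝒟def, Finset.mem_filter] at hD
        intro y hy
        rcases Set.mem_insert_iff.mp hy with rfl | hy
        · exact hxmem D hD.1
        · exact (h𝒟'Z _ hD.2 hy).1
      · intro D hD D' hD' hne
        rw [h𝒟def, Finset.mem_filter] at hD hD'
        intro y hy
        rcases eq_or_ne y x with rfl | hyx
        · exact Set.mem_insert y Z'
        · have hDne : D \ {x} ≠ D' \ {x} := by
            intro heq
            exact hne (hinj (by exact_mod_cast hD.1) (by exact_mod_cast hD'.1) heq)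
          refine Set.mem_insert_of_mem x ?_
          exact h𝒟'int _ hD.2 _ hD'.2 hDne ⟨⟨hy.1, hyx⟩, ⟨hy.2, hyx⟩⟩


open Matroid

variable {α : Type*} {M : Matroid α}

/-- In the sunflower context, a cocircuit which intersects some petal in a single point
must meet the core `Z` in at least two points (provided it is small compared to the
number of petals). -/
lemma trace_ge_two (hE : M.E.Finite) {P : ℕ} {D : Fin P → Set α} {Z : Set α}
    (hcirc : ∀ i, M.IsCircuit' (D i)) (hZ : ∀ i, Z ⊆ D i)
    (hdisj : Pairwise (Function.onFun Disjoint (fun i => D i \ Z)))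
    {F : Set α} (hF : M.IsCocircuit' F) {j : Fin P} {xj : α}
    (hanchor : F ∩ (D j \ Z) = {xj}) (hFcard : F.ncard + 2 ≤ P) :
    2 ≤ (F ∩ Z).ncard := by
  have hFE : F ⊆ M.E := by
    have := hF.subset_ground; rwa [Matroid.dual_ground] at this
  have hFfin : F.Finite := hE.subset hFE
  have hxjF : xj ∈ F ∩ (D j \ Z) := hanchor ▸ rfl
  have hZfin : (F ∩ Z).Finite := hFfin.subset inter_subset_left
  -- F ∩ Z nonempty
  have hne : (F ∩ Z).Nonempty := by
    by_contra hempty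
    rw [Set.not_nonempty_iff_eq_empty] at hempty
    -- then F ∩ D j = {xj} : contradiction with orthogonality
    obtain ⟨f, hf, hfne⟩ := (hcirc j).inter_cocircuit_exists_ne hE hF
      ⟨hxjF.2.1, hxjF.1⟩
    have : f ∈ F ∩ (D j \ Z) := by
      refine ⟨hf.2, hf.1, fun hfZ => ?_⟩
      have : f ∈ F ∩ Z := ⟨hf.2, hfZ⟩
      rw [hempty] at this
      exact this
    rw [hanchor] at this
    exact hfne this
  -- F ∩ Z is not a singleton
  rcases Set.eq_empty_or_nonempty (F ∩ Z) with h | _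
  · exact absurd h (Set.nonempty_iff_ne_empty.mp hne)
  by_contra hlt
  push_neg at hlt
  have hcard1 : (F ∩ Z).ncard = 1 := by
    have := hne.ncard_pos hZfin
    omega
  obtain ⟨u, hu⟩ := Set.ncard_eq_one.mp hcard1
  have huF : u ∈ F := by
    have : u ∈ F ∩ Z := hu ▸ rfl
    exact this.1
  have huZ : u ∈ Z := by
    have : u ∈ F ∩ Z := hu ▸ rfl
    exact this.2
  -- for each petal, a second element of F in that petal
  have hsecond : ∀ i : Fin P, ∃ v, v ∈ F ∩ (D i \ Z) := by
    intro i
    obtain ⟨f, hf, hfne⟩ := (hcirc i).inter_cocircuit_exists_ne hE hF ⟨hZ i huZ, huF⟩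
    refine ⟨f, hf.2, hf.1, fun hfZ => ?_⟩
    have : f ∈ F ∩ Z := ⟨hf.2, hfZ⟩
    rw [hu] at this
    exact hfne this
  choose v hv using hsecond
  have hvinj : Function.Injective v := by
    intro i i' hii'
    by_contra hne'
    exact (hdisj hne').ne_of_mem (hv i).2 (hv i').2 (by rw [hii'])
  -- so F has at least P elements
  have : P ≤ F.ncard := by
    classical
    have himg : (Finset.univ.image v).card = P := by
      rw [Finset.card_image_of_injective _ hvinj, Finset.card_univ, Fintype.card_fin]
    have hsub : (Finset.univ.image v : Finset α) ⊆ hFfin.toFinset := by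
      intro y hy
      obtain ⟨i, _, rfl⟩ := Finset.mem_image.mp hy
      exact hFfin.mem_toFinset.mpr (hv i).1
    have := Finset.card_le_card hsub
    rw [himg, ← Set.ncard_eq_toFinset_card F hFfin] at this
    exact this
  omega


lemma ncard_ge_of_inj_mem {F : Set α} (hFfin : F.Finite) {n : ℕ} (y : Fin n → α)
    (hinj : Function.Injective y) (hmem : ∀ r, y r ∈ F) : n ≤ F.ncard := by
  classical
  have himg : (Finset.univ.image y).card = n := by
    rw [Finset.card_image_of_injective _ hinj, Finset.card_univ, Fintype.card_fin]
  have hsub : (Finset.univ.image y : Finset α) ⊆ hFfin.toFinset := by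
    intro w hw
    obtain ⟨i, _, rfl⟩ := Finset.mem_image.mp hw
    exact hFfin.mem_toFinset.mpr (hmem i)
  have := Finset.card_le_card hsub
  rw [himg, ← Set.ncard_eq_toFinset_card F hFfin] at this
  exact this

/-- Size requirement for the descent. -/
def nu (kk : ℕ) : ℕ → ℕ → ℕ
  | 0, _ => 1
  | (s+1), L => (L+2) * (2^kk * nu kk s (2*L) + 1)

lemma nu_pos (kk s L : ℕ) : 0 < nu kk s L := by
  cases s with
  | zero => simp [nu]
  | succ s => simp only [nu]; positivity

/-- The descent: there is no large family of bounded cocircuits with a common trace on the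
core `Z` of size at least two, each intersecting its own private petal in a single point. -/
lemma descent (hE : M.E.Finite) {P : ℕ} {D : Fin P → Set α} {Z : Set α}
    (hcirc : ∀ i, M.IsCircuit' (D i)) (hZ : ∀ i, Z ⊆ D i)
    (hdisj : Pairwise (Function.onFun Disjoint (fun i => D i \ Z)))
    (kk : ℕ) (hZcard : Z.ncard ≤ kk) (hZfin : Z.Finite) :
    ∀ (s L : ℕ) (A : Set α) (m : ℕ) (F : Fin m → Set α) (π : Fin m → Fin P) (x : Fin m → α),
      A ⊆ Z → 2 ≤ A.ncard → A.ncard ≤ s → Function.Injective π →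
      (∀ i, M.IsCocircuit' (F i)) → (∀ i, (F i).ncard ≤ L) →
      (∀ i, F i ∩ Z = A) → (∀ i, F i ∩ (D (π i) \ Z) = {x i}) →
      nu kk s L ≤ m → 2^s * (2*L) + 2 ≤ P → False := by
  have hE' : M✶.E.Finite := by rw [Matroid.dual_ground]; exact hE
  intro s
  induction s with
  | zero =>
    intro L A m F π x hAZ hA2 hAs hπinj hcoc hFL hFZ hFR hm hP
    omega
  | succ s ih =>
    intro L A m F π x hAZ hA2 hAs hπinj hcoc hFL hFZ hFR hm hP
    classical
    have hAfin : A.Finite := hZfin.subset hAZ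
    obtain ⟨z, hzA⟩ : A.Nonempty := by
      apply Set.nonempty_of_ncard_ne_zero; omega
    have hP' : 2*L + 2 ≤ P := by
      have h1 : 1 ≤ 2^(s+1) := Nat.one_le_two_pow
      have h2 : 2*L ≤ 2^(s+1) * (2*L) := by
        calc 2*L = 1 * (2*L) := by ring
          _ ≤ 2^(s+1) * (2*L) := Nat.mul_le_mul_right _ h1
      omega
    set q := m / (L+2) with hqdef
    have hq1 : 2^kk * nu kk s (2*L) + 1 ≤ q := by
      rw [hqdef, Nat.le_div_iff_mul_le (by omega : 0 < L + 2)]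
      calc (2^kk * nu kk s (2*L) + 1) * (L+2)
          = (L+2) * (2^kk * nu kk s (2*L) + 1) := by ring
        _ = nu kk (s+1) L := rfl
        _ ≤ m := hm
    have hqm : q * (L+2) ≤ m := by
      rw [hqdef]; exact Nat.div_mul_le_self m (L+2)
    -- block indices
    have hblockidx : ∀ (b : Fin q) (r : Fin (L+2)), (b : ℕ) * (L+2) + (r : ℕ) < m := by
      intro b r
      have h1 : ((b : ℕ) + 1) * (L+2) ≤ q * (L+2) := Nat.mul_le_mul_right _ b.isLt
      have h2 : (b : ℕ) * (L+2) + (r : ℕ) < ((b : ℕ) + 1) * (L+2) := by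
        have := r.isLt
        have hexp : ((b : ℕ) + 1) * (L+2) = (b : ℕ) * (L+2) + (L+2) := by ring
        omega
      omega
    have hdivprop : ∀ (b : Fin q) (r : Fin (L+2)), ((b : ℕ) * (L+2) + (r : ℕ)) / (L+2) = b := by
      intro b r
      rw [mul_comm, Nat.mul_add_div (by omega : 0 < L+2), Nat.div_eq_of_lt r.isLt]
      omega
    -- key block extraction
    have hblock : ∀ b : Fin q, ∃ (F' : Set α) (i : Fin m),
        (i : ℕ) / (L+2) = (b : ℕ) ∧ M.IsCocircuit' F' ∧ F'.ncard ≤ 2*L ∧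
        F' ∩ Z ⊆ A \ {z} ∧ F' ∩ (D (π i) \ Z) = {x i} := by
      intro b
      set ι : Fin (L+2) → Fin m := fun r => ⟨(b : ℕ) * (L+2) + (r : ℕ), hblockidx b r⟩
        with hιdef
      have hιinj : Function.Injective ι := by
        intro r r' h
        rw [hιdef] at h
        simp only [Fin.mk.injEq] at h
        exact Fin.ext (by omega)
      -- a good pair in the block
      have hgood : ∃ r r' : Fin (L+2), r ≠ r' ∧ F (ι r') ∩ (D (π (ι r)) \ Z) = ∅ := by
        by_contra hbad
        push_neg at hbad
        have hnonempty : ∀ r : Fin (L+1),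
            (F (ι (Fin.last (L+1))) ∩ (D (π (ι r.castSucc)) \ Z)).Nonempty := by
          intro r
          apply hbad r.castSucc (Fin.last (L+1))
          intro hcontra
          have h2 : (r : ℕ) < L + 1 := r.isLt
          have h3 : ((r.castSucc : Fin (L+2)) : ℕ) = (r : ℕ) := rfl
          have h4 : ((Fin.last (L+1) : Fin (L+2)) : ℕ) = L + 1 := rfl
          rw [Fin.ext_iff, h3, h4] at hcontra
          omega
        choose y hy using hnonempty
        have hyinj : Function.Injective y := by
          intro r r' hrr'
          by_contra hne'
          have hπne : π (ι r.castSucc) ≠ π (ι r'.castSucc) := by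
            intro hcontra
            have := hπinj hcontra
            have := hιinj this
            exact hne' (by
              rw [Fin.ext_iff] at this ⊢
              exact_mod_cast this)
          exact (hdisj hπne).ne_of_mem (hy r).2 (hy r').2 (by rw [hrr'])
        have hFfin : (F (ι (Fin.last (L+1)))).Finite := by
          apply hE.subset
          have := (hcoc (ι (Fin.last (L+1)))).subset_ground
          rwa [Matroid.dual_ground] at this
        have := ncard_ge_of_inj_mem hFfin y hyinj (fun r => (hy r).1)
        have := hFL (ι (Fin.last (L+1)))
        omega
      obtain ⟨r, r', hrne, hdisjFR⟩ := hgood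
      set i := ι r with hidef
      set j := ι r' with hjdef
      have hij : i ≠ j := fun h => hrne (hιinj h)
      -- elements for the strong elimination
      have hxi_mem : x i ∈ F i ∩ (D (π i) \ Z) := by rw [hFR i]; rfl
      have hzi : z ∈ F i := by
        have : z ∈ F i ∩ Z := by rw [hFZ i]; exact hzA
        exact this.1
      have hzj : z ∈ F j := by
        have : z ∈ F j ∩ Z := by rw [hFZ j]; exact hzA
        exact this.1
      have hxinotj : x i ∉ F j := by
        intro hmem
        have : x i ∈ F j ∩ (D (π i) \ Z) := ⟨hmem, hxi_mem.2⟩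
        rw [hdisjFR] at this
        exact this
      obtain ⟨F', hF'circ, hxF', hF'sub⟩ :=
        Matroid.IsCircuit'.strong_elimination hE' (hcoc i) (hcoc j)
          (show z ∈ F i ∩ F j from ⟨hzi, hzj⟩)
          (show x i ∈ F i \ F j from ⟨hxi_mem.1, hxinotj⟩)
      have hFiE : F i ⊆ M.E := by
        have := (hcoc i).subset_ground; rwa [Matroid.dual_ground] at this
      have hFjE : F j ⊆ M.E := by
        have := (hcoc j).subset_ground; rwa [Matroid.dual_ground] at this
      have hunion_fin : (F i ∪ F j).Finite := hE.subset (Set.union_subset hFiE hFjE)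
      refine ⟨F', i, ?_, hF'circ, ?_, ?_, ?_⟩
      · rw [hidef, hιdef]; exact hdivprop b r
      · calc F'.ncard ≤ (F i ∪ F j).ncard :=
              Set.ncard_le_ncard (hF'sub.trans diff_subset) hunion_fin
          _ ≤ (F i).ncard + (F j).ncard := Set.ncard_union_le _ _
          _ ≤ 2*L := by have := hFL i; have := hFL j; omega
      · intro y hy
        have hysub := hF'sub hy.1
        have hyZ := hy.2
        refine ⟨?_, hysub.2⟩
        rcases hysub.1 with h | h
        · have : y ∈ F i ∩ Z := ⟨h, hyZ⟩
          rw [hFZ i] at this; exact this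
        · have : y ∈ F j ∩ Z := ⟨h, hyZ⟩
          rw [hFZ j] at this; exact this
      · apply subset_antisymm
        · intro y hy
          have hysub := hF'sub hy.1
          rcases hysub.1 with h | h
          · have : y ∈ F i ∩ (D (π i) \ Z) := ⟨h, hy.2⟩
            rw [hFR i] at this; exact this
          · have : y ∈ F j ∩ (D (π i) \ Z) := ⟨h, hy.2⟩
            rw [hdisjFR] at this; exact absurd this (Set.notMem_empty y)
        · intro y hy
          rw [Set.mem_singleton_iff] at hy
          subst hy
          exact ⟨hxF', hxi_mem.2⟩
    choose Fb ib hibdiv hcocb hcardb htrb hanchb using hblock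
    -- traces are at least 2 and contained in A \ {z}
    have htr2 : ∀ b, 2 ≤ (Fb b ∩ Z).ncard := by
      intro b
      apply trace_ge_two hE hcirc hZ hdisj (hcocb b) (hanchb b)
      have := hcardb b
      omega
    -- pigeonhole on traces
    set V : Finset (Set α) :=
      hZfin.toFinset.powerset.image (fun (t : Finset α) => (t : Set α)) with hVdef
    have hTV : ∀ b : Fin q, (Fb b ∩ Z) ∈ V := by
      intro b
      have hfin : (Fb b ∩ Z).Finite := hZfin.subset inter_subset_right
      have hmemP : hfin.toFinset ∈ hZfin.toFinset.powerset := by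
        rw [Finset.mem_powerset]
        intro y hy
        rw [Set.Finite.mem_toFinset] at hy
        exact hZfin.mem_toFinset.mpr hy.2
      rw [hVdef]
      exact Finset.mem_image.mpr ⟨hfin.toFinset, hmemP, hfin.coe_toFinset⟩
    have hVcard : V.card ≤ 2^kk := by
      have h1 : V.card ≤ hZfin.toFinset.powerset.card := by
        rw [hVdef]; exact Finset.card_image_le
      have h2 : hZfin.toFinset.powerset.card = 2 ^ hZfin.toFinset.card :=
        Finset.card_powerset _
      have h3 : hZfin.toFinset.card ≤ kk := by
        rw [← Set.ncard_eq_toFinset_card Z hZfin]; exact hZcard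
      have h4 : (2:ℕ) ^ hZfin.toFinset.card ≤ 2^kk := Nat.pow_le_pow_right (by omega) h3
      omega
    have hqpos : 0 < q := by
      have := nu_pos kk s (2*L)
      have := Nat.one_le_two_pow (n := kk)
      nlinarith
    have hq0 : 0 < (Finset.univ : Finset (Fin q)).card := by
      rw [Finset.card_univ, Fintype.card_fin]; exact hqpos
    obtain ⟨A', hA'V, hA'fib⟩ := exists_large_fiber' Finset.univ (fun b => Fb b ∩ Z) V
      (fun b _ => hTV b) hq0
    set m' := nu kk s (2*L) with hm'def
    have hfibcard : m' ≤ (Finset.univ.filter (fun b => Fb b ∩ Z = A')).card := by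
      by_contra hlt
      push_neg at hlt
      have h1 := hA'fib m' hlt
      rw [Finset.card_univ, Fintype.card_fin] at h1
      have h2 : V.card * m' ≤ 2^kk * m' := Nat.mul_le_mul_right _ hVcard
      omega
    obtain ⟨g, hginj, hgmem⟩ := exists_injection_of_card_le hfibcard
    have hgfib : ∀ b, Fb (g b) ∩ Z = A' := by
      intro b
      have := hgmem b
      rw [Finset.mem_filter] at this
      exact this.2
    have hm'pos : 0 < m' := nu_pos kk s (2*L)
    set b₀ : Fin m' := ⟨0, hm'pos⟩ with hb₀def
    -- properties of A'
    have hA'sub : A' ⊆ A \ {z} := by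
      rw [← hgfib b₀]; exact htrb (g b₀)
    have hA'Z : A' ⊆ Z := fun y hy => hAZ (hA'sub hy).1
    have hA'2 : 2 ≤ A'.ncard := by rw [← hgfib b₀]; exact htr2 (g b₀)
    have hA's : A'.ncard ≤ s := by
      have h1 : A'.ncard ≤ (A \ {z}).ncard :=
        Set.ncard_le_ncard hA'sub (hAfin.subset diff_subset)
      have h2 : (A \ {z}).ncard = A.ncard - 1 :=
        Set.ncard_diff_singleton_of_mem hzA
      omega
    -- the new family
    have hπ'inj : Function.Injective (fun b : Fin m' => π (ib (g b))) := by
      intro b b' h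
      simp only at h
      have h1 := hπinj h
      have h2 : ((ib (g b)) : ℕ) / (L+2) = ((ib (g b')) : ℕ) / (L+2) := by rw [h1]
      rw [hibdiv (g b), hibdiv (g b')] at h2
      have h3 : g b = g b' := Fin.ext h2
      exact hginj h3
    apply ih (2*L) A' m' (fun b => Fb (g b)) (fun b => π (ib (g b)))
      (fun b => x (ib (g b))) hA'Z hA'2 hA's hπ'inj
      (fun b => hcocb (g b)) (fun b => hcardb (g b)) hgfib (fun b => hanchb (g b)) le_rfl
    calc 2^s * (2*(2*L)) + 2 = 2^(s+1) * (2*L) + 2 := by ring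
      _ ≤ P := hP

lemma parts_bound {C : Set α} (hCfin : C.Finite) {n : ℕ} (A : Fin n → Set α)
    (hsub : ∀ i, A i ⊆ C) (hdisj : Pairwise (Function.onFun Disjoint A)) (lb : Fin n → ℕ)
    (hlb : ∀ i, lb i ≤ (A i).ncard) : ∑ i, lb i ≤ C.ncard :=
  le_trans (Finset.sum_le_sum fun i _ => hlb i)
    (sum_ncard_le_of_disjoint_parts hCfin A hsub hdisj)

lemma confinement {C : Set α} (hCfin : C.Finite) {n : ℕ} (A : Fin n → Set α)
    (hsub : ∀ i, A i ⊆ C) (hdisj : Pairwise (Function.onFun Disjoint A))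
    (h2 : ∀ i, 2 ≤ (A i).ncard) (hC : C.ncard ≤ 2*n) : C ⊆ ⋃ i, A i := by
  have hsum : 2*n ≤ ∑ i, (A i).ncard := by
    calc 2*n = ∑ _i : Fin n, 2 := by
          rw [Finset.sum_const, Finset.card_univ, Fintype.card_fin, smul_eq_mul]; ring
      _ ≤ ∑ i, (A i).ncard := Finset.sum_le_sum (fun i _ => h2 i)
  have hcup : (⋃ i, A i).ncard = ∑ i, (A i).ncard :=
    ncard_iUnion_fin n A (fun i => hCfin.subset (hsub i)) hdisj
  have heq : (⋃ i, A i) = C :=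
    Set.eq_of_subset_of_ncard_le (Set.iUnion_subset hsub) (by omega) hCfin
  rw [heq]

/-- The number of groups. -/
def NG (k d t : ℕ) : ℕ := d + 2^k * (nu k t (2*t) + 1)

/-- The number of petals. -/
def NP (k d t : ℕ) : ℕ := t * NG k d t + 2^t * (2*(2*t)) + 2*t + 4

end Statement8Aux

universe u

open Matroid
open Statement8Aux

/-- There is a function `h : ℕ³ → ℕ` such that any (finite) matroid with at least
`h(k,d,t)` distinct `k`-element circuits, in which every `t`-element set is contained in a
`2t`-element cocircuit, has `d` pairwise disjoint `2t`-element cocircuits. -/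
theorem statement8 :
    ∃ h : ℕ × ℕ × ℕ → ℕ, ∀ (k d t : ℕ), 0 < k → 0 < d → 0 < t →
      ∀ {α : Type u} (M : Matroid α), M.E.Finite →
        h (k, d, t) ≤ {C : Set α | M.IsCircuit' C ∧ C.ncard = k}.ncard →
        (∀ T ⊆ M.E, T.ncard = t → ∃ C, M.IsCocircuit' C ∧ C.ncard = 2 * t ∧ T ⊆ C) →
        ∃ Cs : Fin d → Set α, Pairwise (Function.onFun Disjoint Cs) ∧
          ∀ i, M.IsCocircuit' (Cs i) ∧ (Cs i).ncard = 2 * t := by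
  classical
  refine ⟨fun p => sfBound p.1 (NP p.1 p.2.1 p.2.2 + 1), ?_⟩
  intro k d t hk hd ht α M hE hcount hcocirc
  set np := NP k d t with hnpdef
  set ng := NG k d t with hngdef
  -- the finset of k-circuits
  set 𝒞set := {C : Set α | M.IsCircuit' C ∧ C.ncard = k} with h𝒞setdef
  have h𝒞fin : 𝒞set.Finite := by
    apply hE.finite_subsets.subset
    intro C hC
    exact hC.1.subset_ground
  set 𝒞 := h𝒞fin.toFinset with h𝒞def
  have h𝒞card : sfBound k (np + 1) ≤ 𝒞.card := by
    rw [h𝒞def, ← Set.ncard_eq_toFinset_card _ h𝒞fin]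
    exact hcount
  -- sunflower
  obtain ⟨Z, 𝒟, h𝒟sub, h𝒟card, h𝒟Z, h𝒟int⟩ := weak_sunflower (np+1) k 𝒞
    (fun D hD => by
      have := h𝒞fin.mem_toFinset.mp hD
      exact ⟨hE.subset this.1.subset_ground, this.2⟩) h𝒞card
  have h𝒟circ : ∀ D ∈ 𝒟, M.IsCircuit' D ∧ D.ncard = k := by
    intro D hD
    exact h𝒞fin.mem_toFinset.mp (h𝒟sub hD)
  -- remove the possible member equal to Z
  set 𝒟' := 𝒟.erase Z with h𝒟'def
  have h𝒟'card : np ≤ 𝒟'.card := by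
    have h1 : 𝒟.card - 1 ≤ 𝒟'.card := Finset.pred_card_le_card_erase
    omega
  obtain ⟨Df, hDfinj, hDfmem⟩ := exists_injection_of_card_le h𝒟'card
  have hDf𝒟 : ∀ p, Df p ∈ 𝒟 := fun p => Finset.mem_of_mem_erase (hDfmem p)
  have hcirc : ∀ p, M.IsCircuit' (Df p) := fun p => (h𝒟circ _ (hDf𝒟 p)).1
  have hcardk : ∀ p, (Df p).ncard = k := fun p => (h𝒟circ _ (hDf𝒟 p)).2
  have hZsub : ∀ p, Z ⊆ Df p := fun p => h𝒟Z _ (hDf𝒟 p)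
  have hpetne : ∀ p, (Df p \ Z).Nonempty := by
    intro p
    rw [Set.nonempty_iff_ne_empty]
    intro hempty
    have hDZ : Df p = Z := by
      apply subset_antisymm _ (hZsub p)
      intro y hy
      by_contra hyZ
      have hmem : y ∈ Df p \ Z := ⟨hy, hyZ⟩
      rw [hempty] at hmem
      exact hmem
    exact (Finset.ne_of_mem_erase (hDfmem p)) hDZ
  have hpetdisj : Pairwise (Function.onFun Disjoint (fun p => Df p \ Z)) := by
    intro p p' hpp'
    refine Set.disjoint_left.mpr (fun y hy hy' => ?_)
    have hDne : Df p ≠ Df p' := fun h => hpp' (hDfinj h)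
    have : y ∈ Df p ∩ Df p' := ⟨hy.1, hy'.1⟩
    exact hy.2 (h𝒟int _ (hDf𝒟 p) _ (hDf𝒟 p') hDne this)
  have hnp1 : 0 < np := by
    rw [hnpdef]; unfold NP; positivity
  have hZfin : Z.Finite := (hE.subset (hcirc ⟨0, hnp1⟩).subset_ground).subset
    (hZsub ⟨0, hnp1⟩)
  have hZk : Z.ncard ≤ k := by
    have h1 : Z.ncard ≤ (Df ⟨0, hnp1⟩).ncard :=
      Set.ncard_le_ncard (hZsub ⟨0, hnp1⟩) (hE.subset (hcirc ⟨0, hnp1⟩).subset_ground)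
    rw [hcardk ⟨0, hnp1⟩] at h1
    exact h1
  -- petal choice
  have hwex : ∀ p : Fin np, ∃ y, y ∈ Df p \ Z := fun p => hpetne p
  choose w hw using hwex
  -- group indexing
  have hgi : ∀ (g : Fin ng) (i : Fin t), (g:ℕ) * t + (i:ℕ) < np := by
    intro g i
    have h1 : ((g:ℕ)+1) * t ≤ ng * t := Nat.mul_le_mul_right _ g.isLt
    have h2 : (g:ℕ) * t + (i:ℕ) < ((g:ℕ)+1)*t := by
      have := i.isLt
      have hexp : ((g:ℕ)+1)*t = (g:ℕ)*t + t := by ring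
      omega
    have h3 : ng * t ≤ np := by
      rw [hnpdef, hngdef]
      calc NG k d t * t = t * NG k d t := by ring
        _ ≤ NP k d t := by unfold NP; omega
    omega
  set σ : Fin ng → Fin t → Fin np := fun g i => ⟨(g:ℕ)*t + (i:ℕ), hgi g i⟩ with hσdef
  have hσdiv : ∀ g i, ((σ g i : Fin np) : ℕ) / t = (g : ℕ) := by
    intro g i
    rw [hσdef]
    simp only
    rw [mul_comm, Nat.mul_add_div (by omega : 0 < t), Nat.div_eq_of_lt i.isLt]
    omega
  have hσinj2 : ∀ g i g' i', σ g i = σ g' i' → g = g' ∧ i = i' := by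
    intro g i g' i' h
    have hval : (g:ℕ)*t + (i:ℕ) = (g':ℕ)*t + (i':ℕ) := by
      have := congrArg (fun (z : Fin np) => (z : ℕ)) h
      simpa [hσdef] using this
    have h1 := hσdiv g i
    have h2 := hσdiv g' i'
    rw [h] at h1
    have hg : g = g' := Fin.ext (by omega)
    subst hg
    refine ⟨rfl, Fin.ext ?_⟩
    omega
  -- transversals
  have hwinj : ∀ g, Function.Injective (fun i : Fin t => w (σ g i)) := by
    intro g i i' h
    by_contra hne
    have hσne : σ g i ≠ σ g i' := fun hc => hne (hσinj2 g i g i' hc).2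
    exact (hpetdisj (fun hc : σ g i = σ g i' => hne (hσinj2 g i g i' hc).2)).ne_of_mem
      (hw (σ g i)) (hw (σ g i')) (by simp only at h; rw [h])
  set T : Fin ng → Set α := fun g => (fun i : Fin t => w (σ g i)) '' Set.univ with hTdef
  have hTsub : ∀ g, T g ⊆ M.E := by
    intro g y hy
    obtain ⟨i, _, rfl⟩ := hy
    exact (hcirc (σ g i)).subset_ground (hw (σ g i)).1
  have hTcard : ∀ g, (T g).ncard = t := by
    intro g
    rw [hTdef]
    simp only
    rw [Set.ncard_image_of_injective _ (hwinj g), Set.ncard_univ, Nat.card_eq_fintype_card,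
      Fintype.card_fin]
  have hCex : ∀ g : Fin ng, ∃ C, M.IsCocircuit' C ∧ C.ncard = 2*t ∧ T g ⊆ C :=
    fun g => hcocirc (T g) (hTsub g) (hTcard g)
  choose C hCcoc hCcard hCT using hCex
  have hCfin : ∀ g, (C g).Finite := by
    intro g
    apply hE.subset
    have := (hCcoc g).subset_ground
    rwa [Matroid.dual_ground] at this
  have hwC : ∀ g i, w (σ g i) ∈ C g := fun g i => hCT g ⟨i, Set.mem_univ i, rfl⟩
  -- dichotomy
  set clean := Finset.univ.filter (fun g : Fin ng => C g ∩ Z = ∅) with hcleandef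
  by_cases hcase : d ≤ clean.card
  · -- CASE A : enough clean groups
    obtain ⟨ι, hιinj, hιmem⟩ := exists_injection_of_card_le hcase
    have hclean : ∀ j : Fin d, C (ι j) ∩ Z = ∅ := by
      intro j
      have := hιmem j
      rw [hcleandef, Finset.mem_filter] at this
      exact this.2
    -- confinement of clean cocircuits in their own petals
    have hconf : ∀ j : Fin d, C (ι j) ⊆ ⋃ i : Fin t, (C (ι j) ∩ (Df (σ (ι j) i) \ Z)) := by
      intro j
      set g := ι j with hgdef
      apply confinement (hCfin g) _ (fun i => inter_subset_left)
      · intro i i' hii'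
        refine Set.disjoint_left.mpr (fun y hy hy' => ?_)
        have hσne : σ g i ≠ σ g i' := fun hc => hii' (hσinj2 g i g i' hc).2
        exact (hpetdisj hσne).ne_of_mem hy.2 hy'.2 rfl
      · intro i
        -- two elements: the transversal element and a second one by orthogonality
        obtain ⟨f, hf, hfne⟩ := (hcirc (σ g i)).inter_cocircuit_exists_ne hE (hCcoc g)
          ⟨(hw (σ g i)).1, hwC g i⟩
        have hfpet : f ∈ C g ∩ (Df (σ g i) \ Z) := by
          refine ⟨hf.2, hf.1, fun hfZ => ?_⟩
          have : f ∈ C g ∩ Z := ⟨hf.2, hfZ⟩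
          rw [hclean j] at this
          exact this
        have hwpet : w (σ g i) ∈ C g ∩ (Df (σ g i) \ Z) := ⟨hwC g i, hw (σ g i)⟩
        exact Nat.succ_le_of_lt ((Set.one_lt_ncard_iff
          ((hCfin g).subset inter_subset_left)).mpr ⟨f, w (σ g i), hfpet, hwpet, hfne⟩)
      · rw [hCcard g]
    refine ⟨fun j => C (ι j), ?_, fun j => ⟨hCcoc (ι j), hCcard (ι j)⟩⟩
    intro j j' hjj'
    refine Set.disjoint_left.mpr (fun y hy hy' => ?_)
    obtain ⟨s1, hs1⟩ := Set.mem_iUnion.mp (hconf j hy)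
    obtain ⟨s2, hs2⟩ := Set.mem_iUnion.mp (hconf j' hy')
    have hσne : σ (ι j) s1 ≠ σ (ι j') s2 := by
      intro hc
      have := (hσinj2 _ _ _ _ hc).1
      exact hjj' (hιinj this)
    exact (hpetdisj hσne).ne_of_mem hs1.2 hs2.2 rfl
  · -- CASE B : many dirty groups, derive a contradiction via the descent
    exfalso
    push_neg at hcase
    set dirty := Finset.univ.filter (fun g : Fin ng => ¬(C g ∩ Z = ∅)) with hdirtydef
    have hdirtycard : 2^k * (nu k t (2*t) + 1) + 1 ≤ dirty.card := by
      have hsplit : clean.card + dirty.card = ng := by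
        rw [hcleandef, hdirtydef]
        have h0 := Finset.card_filter_add_card_filter_not
          (s := (Finset.univ : Finset (Fin ng))) (p := fun g : Fin ng => C g ∩ Z = ∅)
        have huniv : (Finset.univ : Finset (Fin ng)).card = ng := by simp
        omega
      have hng1 : ng = d + 2^k * (nu k t (2*t) + 1) := by rw [hngdef]; rfl
      omega
    -- each dirty group has a singly-anchored petal
    have hanchor : ∀ g : Fin ng, g ∈ dirty →
        ∃ i : Fin t, C g ∩ (Df (σ g i) \ Z) = {w (σ g i)} := by
      intro g hg
      rw [hdirtydef, Finset.mem_filter] at hg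
      have hgne : (C g ∩ Z).Nonempty := Set.nonempty_iff_ne_empty.mpr hg.2
      by_contra hno
      push_neg at hno
      -- all petal intersections have ≥ 2 elements, plus the trace: > 2t elements
      set A : Fin (t+1) → Set α := fun i =>
        if h : (i:ℕ) < t then C g ∩ (Df (σ g ⟨(i:ℕ), h⟩) \ Z) else C g ∩ Z with hAdef
      have hsub : ∀ i, A i ⊆ C g := by
        intro i
        rw [hAdef]
        by_cases h : (i:ℕ) < t
        · simp only [dif_pos h]; exact inter_subset_left
        · simp only [dif_neg h]; exact inter_subset_left
      have hdisjA : Pairwise (Function.onFun Disjoint A) := by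
        intro i i' hii'
        rw [Function.onFun, hAdef]
        by_cases h : (i:ℕ) < t <;> by_cases h' : (i':ℕ) < t
        · simp only [dif_pos h, dif_pos h']
          refine Set.disjoint_left.mpr (fun y hy hy' => ?_)
          have hσne : σ g ⟨(i:ℕ), h⟩ ≠ σ g ⟨(i':ℕ), h'⟩ := by
            intro hc
            have h5 := (hσinj2 _ _ _ _ hc).2
            apply hii'
            have h6 : (i:ℕ) = (i':ℕ) := by
              have := congrArg Fin.val h5
              simpa using this
            exact Fin.ext h6
          exact (hpetdisj hσne).ne_of_mem hy.2 hy'.2 rfl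
        · simp only [dif_pos h, dif_neg h']
          exact Set.disjoint_left.mpr (fun y hy hy' => hy.2.2 hy'.2)
        · simp only [dif_neg h, dif_pos h']
          exact Set.disjoint_left.mpr (fun y hy hy' => hy'.2.2 hy.2)
        · exfalso
          apply hii'
          have h5 : (i:ℕ) ≥ t := by omega
          have h6 : (i':ℕ) ≥ t := by omega
          have := i.isLt
          have := i'.isLt
          exact Fin.ext (by omega)
      set lb : Fin (t+1) → ℕ := fun i => if (i:ℕ) < t then 2 else 1 with hlbdef
      have hlb : ∀ i, lb i ≤ (A i).ncard := by
        intro i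
        rw [hlbdef, hAdef]
        by_cases h : (i:ℕ) < t
        · simp only [if_pos h, dif_pos h]
          obtain ⟨f, hf, hfne⟩ := (hcirc (σ g ⟨(i:ℕ), h⟩)).inter_cocircuit_exists_ne hE
            (hCcoc g) ⟨(hw (σ g ⟨(i:ℕ), h⟩)).1, hwC g ⟨(i:ℕ), h⟩⟩
          by_cases hfZ : f ∈ Z
          · -- then C g ∩ petal ⊋ or = {w}: excluded singleton hno gives second elt anyway
            have hwpet : w (σ g ⟨(i:ℕ), h⟩) ∈ C g ∩ (Df (σ g ⟨(i:ℕ), h⟩) \ Z) :=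
              ⟨hwC g _, hw _⟩
            have hne2 := hno ⟨(i:ℕ), h⟩
            have : ∃ y ∈ C g ∩ (Df (σ g ⟨(i:ℕ), h⟩) \ Z), y ≠ w (σ g ⟨(i:ℕ), h⟩) := by
              by_contra hall
              push_neg at hall
              apply hne2
              apply subset_antisymm
              · intro y hy
                by_contra hyne
                exact hyne (hall y hy)
              · intro y hy
                rw [Set.mem_singleton_iff] at hy
                subst hy
                exact hwpet
            obtain ⟨y, hy, hyne⟩ := this
            exact Nat.succ_le_of_lt ((Set.one_lt_ncard_iff
              ((hCfin g).subset inter_subset_left)).mpr ⟨y, w (σ g ⟨(i:ℕ), h⟩), hy, hwpet, hyne⟩)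
          · have hfpet : f ∈ C g ∩ (Df (σ g ⟨(i:ℕ), h⟩) \ Z) := ⟨hf.2, hf.1, hfZ⟩
            have hwpet : w (σ g ⟨(i:ℕ), h⟩) ∈ C g ∩ (Df (σ g ⟨(i:ℕ), h⟩) \ Z) :=
              ⟨hwC g _, hw _⟩
            exact Nat.succ_le_of_lt ((Set.one_lt_ncard_iff
              ((hCfin g).subset inter_subset_left)).mpr ⟨f, w (σ g ⟨(i:ℕ), h⟩), hfpet, hwpet, hfne⟩)
        · simp only [if_neg h, dif_neg h]
          exact Nat.one_le_iff_ne_zero.mpr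
            (Set.ncard_ne_zero_of_mem hgne.choose_spec ((hCfin g).subset inter_subset_left))
      have hbound := parts_bound (hCfin g) A hsub hdisjA lb hlb
      have hsumlb : ∑ i, lb i = 2*t + 1 := by
        rw [hlbdef, Fin.sum_univ_castSucc]
        have h1 : ∀ i : Fin t, (fun i : Fin (t+1) => if (i:ℕ) < t then 2 else 1) i.castSucc
            = 2 := by
          intro i
          simp only [Fin.coe_castSucc]
          rw [if_pos i.isLt]
        have h2 : (fun i : Fin (t+1) => if (i:ℕ) < t then 2 else 1) (Fin.last t) = 1 := by
          simp only [Fin.val_last]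
          rw [if_neg (by omega)]
        rw [Finset.sum_congr rfl (fun i _ => h1 i), Finset.sum_const, Finset.card_univ,
          Fintype.card_fin, smul_eq_mul, Fin.val_last, if_neg (lt_irrefl t)]
        ring
      rw [hsumlb, hCcard g] at hbound
      omega
    -- trace of each dirty group
    have htrace2 : ∀ g ∈ dirty, 2 ≤ (C g ∩ Z).ncard := by
      intro g hg
      obtain ⟨i, hi⟩ := hanchor g hg
      apply trace_ge_two hE hcirc hZsub hpetdisj (hCcoc g) hi
      rw [hCcard g, hnpdef]
      unfold NP
      omega
    have htracet : ∀ g : Fin ng, (C g ∩ Z).ncard ≤ t := by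
      intro g
      have hTZ : Disjoint (C g ∩ Z) (T g) := by
        refine Set.disjoint_left.mpr (fun y hy hy' => ?_)
        obtain ⟨i, _, rfl⟩ := hy'
        exact (hw (σ g i)).2 hy.2
      have hbound := parts_bound (hCfin g) (fun b : Fin 2 => if b = 0 then C g ∩ Z else T g)
        (by intro b; by_cases h : b = 0
            · simp only [if_pos h]; exact inter_subset_left
            · simp only [if_neg h]; exact hCT g)
        (by intro b b' hbb'
            rw [Function.onFun]
            by_cases h : b = 0 <;> by_cases h' : b' = 0
            · exact absurd (h.trans h'.symm) hbb'
            · simp only [if_pos h, if_neg h']; exact hTZ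
            · simp only [if_neg h, if_pos h']; exact hTZ.symm
            · exfalso
              apply hbb'
              have hb : (b:ℕ) ≠ 0 := fun hc => h (Fin.ext hc)
              have hb' : (b':ℕ) ≠ 0 := fun hc => h' (Fin.ext hc)
              have := b.isLt
              have := b'.isLt
              exact Fin.ext (by omega))
        (fun b : Fin 2 => if b = 0 then (C g ∩ Z).ncard else t)
        (by intro b; by_cases h : b = 0
            · simp only [if_pos h]; exact le_rfl
            · simp only [if_neg h]; exact le_of_eq (hTcard g).symm)
      rw [Fin.sum_univ_two] at hbound
      have hb0 : (if (0 : Fin 2) = 0 then (C g ∩ Z).ncard else t) = (C g ∩ Z).ncard :=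
        if_pos rfl
      have hb1 : (if (1 : Fin 2) = 0 then (C g ∩ Z).ncard else t) = t :=
        if_neg (by decide)
      rw [hb0, hb1, hCcard g] at hbound
      omega
    -- pigeonhole over traces
    have hanchor' : ∀ g : Fin ng, ∃ i : Fin t,
        g ∈ dirty → C g ∩ (Df (σ g i) \ Z) = {w (σ g i)} := by
      intro g
      by_cases hg : g ∈ dirty
      · obtain ⟨i, hi⟩ := hanchor g hg
        exact ⟨i, fun _ => hi⟩
      · exact ⟨⟨0, ht⟩, fun hg' => absurd hg' hg⟩
    choose ianch hianch using hanchor'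
    set V : Finset (Set α) :=
      hZfin.toFinset.powerset.image (fun (s : Finset α) => (s : Set α)) with hVdef
    have hTV : ∀ g ∈ dirty, (C g ∩ Z) ∈ V := by
      intro g _
      have hfin : (C g ∩ Z).Finite := hZfin.subset inter_subset_right
      have hmemP : hfin.toFinset ∈ hZfin.toFinset.powerset := by
        rw [Finset.mem_powerset]
        intro y hy
        rw [Set.Finite.mem_toFinset] at hy
        exact hZfin.mem_toFinset.mpr hy.2
      rw [hVdef]
      exact Finset.mem_image.mpr ⟨hfin.toFinset, hmemP, hfin.coe_toFinset⟩
    have hVcard : V.card ≤ 2^k := by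
      have h1 : V.card ≤ hZfin.toFinset.powerset.card := by
        rw [hVdef]; exact Finset.card_image_le
      have h2 : hZfin.toFinset.powerset.card = 2 ^ hZfin.toFinset.card :=
        Finset.card_powerset _
      have h3 : hZfin.toFinset.card ≤ k := by
        rw [← Set.ncard_eq_toFinset_card Z hZfin]; exact hZk
      have h4 : (2:ℕ) ^ hZfin.toFinset.card ≤ 2^k := Nat.pow_le_pow_right (by omega) h3
      omega
    have hdirtypos : 0 < dirty.card := by
      have := Nat.one_le_two_pow (n := k)
      nlinarith
    obtain ⟨A', hA'V, hA'fib⟩ := exists_large_fiber' dirty (fun g => C g ∩ Z) V hTV hdirtypos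
    set m₀ := nu k t (2*t) with hm₀def
    have hfibcard : m₀ ≤ (dirty.filter (fun g => C g ∩ Z = A')).card := by
      by_contra hlt
      push_neg at hlt
      have h1 := hA'fib m₀ hlt
      have h2 : V.card * m₀ ≤ 2^k * m₀ := Nat.mul_le_mul_right _ hVcard
      have h3 : 2^k * m₀ + 2^k ≤ dirty.card := by
        have : 2^k * (m₀ + 1) = 2^k * m₀ + 2^k := by ring
        omega
      have := Nat.one_le_two_pow (n := k)
      omega
    obtain ⟨γ, hγinj, hγmem⟩ := exists_injection_of_card_le hfibcard
    have hγdirty : ∀ b, γ b ∈ dirty := fun b => Finset.mem_of_mem_filter _ (hγmem b)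
    have hγfib : ∀ b, C (γ b) ∩ Z = A' := by
      intro b
      have := hγmem b
      rw [Finset.mem_filter] at this
      exact this.2
    have hm₀pos : 0 < m₀ := nu_pos k t (2*t)
    set b₀ : Fin m₀ := ⟨0, hm₀pos⟩ with hb₀def
    have hA'Z : A' ⊆ Z := by
      rw [← hγfib b₀]; exact inter_subset_right
    have hA'2 : 2 ≤ A'.ncard := by
      rw [← hγfib b₀]; exact htrace2 _ (hγdirty b₀)
    have hA't : A'.ncard ≤ t := by
      rw [← hγfib b₀]; exact htracet _
    -- build the family for the descent
    set π : Fin m₀ → Fin np := fun b => σ (γ b) (ianch (γ b)) with hπdef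
    set xx : Fin m₀ → α := fun b => w (π b) with hxxdef
    have hπinj : Function.Injective π := by
      intro b b' h
      rw [hπdef] at h
      simp only at h
      exact hγinj (hσinj2 _ _ _ _ h).1
    refine descent hE hcirc hZsub hpetdisj k hZk hZfin t (2*t) A' m₀
      (fun b => C (γ b)) π xx hA'Z hA'2 hA't hπinj
      (fun b => hCcoc (γ b)) (fun b => le_of_eq (hCcard (γ b))) hγfib
      (fun b => hianch (γ b) (hγdirty b)) le_rfl ?_
    rw [hnpdef]
    unfold NP
    omega
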